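/- arXiv:1403.2483 — 3 statements merged into one kernel-verified Lean document; each statement's English description precedes it below -/
import Mathlib

section
/- Let (M, d) be a metric space, let x : [0,T] → M be a path with length c(x) computed as the supremum over partitions of sums of consecutive distances, let 0 = τ₁ < τ₂ < ... < τ_M = T be a partition, and let y₁,...,y_M be points with d(y_m, x(τ_m)) ≤ ρ for all m, such that more than a (1−α) fraction of the indices m satisfy d(y_m, x(τ_m)) ≤ βρ for some β ∈ (0,1) and α ∈ (0,1). Then the sum ∑_{m=1}^{M−1} d(y_m, y_{m+1}) is at most c(x) + 2Mρ(β + α − αβ). -/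
open Finset

/-- Lemma 3 (waypoint cost bound): if waypoints `y m` lie within sub-Riemannian
distance `ρ` of the reference points `x (τ m)` along a path of length `c`, and at
most an `α` fraction of them are farther than `β * ρ`, then the cost of the path
sequentially connecting the waypoints is at most `c + 2 M ρ (β + α - α β)`. -/
theorem waypoint_cost_bound
    {X : Type*} [MetricSpace X] (M : ℕ) (hM : 1 ≤ M)
    (x : ℝ → X) (τ : ℕ → ℝ) (T : ℝ)
    (hτ0 : τ 0 = 0) (hτT : τ (M - 1) = T)
    (hτmono : ∀ m, m + 1 < M → τ m < τ (m + 1))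
    (c ρ α β : ℝ)
    (hα : α ∈ Set.Ioo (0 : ℝ) 1) (hβ : β ∈ Set.Ioo (0 : ℝ) 1)
    (hc : ∑ m ∈ Finset.range (M - 1), dist (x (τ m)) (x (τ (m + 1))) ≤ c)
    (y : ℕ → X)
    (hy : ∀ m < M, dist (y m) (x (τ m)) ≤ ρ)
    (hfrac : (((Finset.range M).filter
        (fun m => ¬ dist (y m) (x (τ m)) ≤ β * ρ)).card : ℝ) ≤ α * M) :
    ∑ m ∈ Finset.range (M - 1), dist (y m) (y (m + 1))
      ≤ c + 2 * M * ρ * (β + α - α * β) := by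
  classical
  obtain ⟨hα0, hα1⟩ := hα
  obtain ⟨hβ0, hβ1⟩ := hβ
  have hρ : 0 ≤ ρ := le_trans dist_nonneg (hy 0 hM)
  set e : ℕ → ℝ := fun m => dist (y m) (x (τ m)) with he
  have henn : ∀ m, 0 ≤ e m := fun m => dist_nonneg
  -- bound on sum of e over range M
  have key : ∑ m ∈ Finset.range M, e m ≤ M * ρ * (β + α - α * β) := by
    set B := (Finset.range M).filter (fun m => ¬ dist (y m) (x (τ m)) ≤ β * ρ) with hB
    have hBsub : B ⊆ Finset.range M := Finset.filter_subset _ _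
    have hsplit : ∑ m ∈ Finset.range M \ B, e m + ∑ m ∈ B, e m
        = ∑ m ∈ Finset.range M, e m := Finset.sum_sdiff hBsub
    have hBcard : B.card ≤ M := le_trans (Finset.card_le_card hBsub) (by simp)
    have h1 : ∑ m ∈ B, e m ≤ (B.card : ℝ) * ρ := by
      have := Finset.sum_le_card_nsmul B e ρ (fun m hm => by
        have hm' := hBsub hm
        exact hy m (Finset.mem_range.mp hm'))
      simpa [nsmul_eq_mul] using this
    have h2 : ∑ m ∈ Finset.range M \ B, e m ≤ ((M - B.card : ℕ) : ℝ) * (β * ρ) := by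
      have hcard : (Finset.range M \ B).card = M - B.card := by
        rw [Finset.card_sdiff_of_subset hBsub, Finset.card_range]
      have := Finset.sum_le_card_nsmul (Finset.range M \ B) e (β * ρ) (fun m hm => by
        rw [Finset.mem_sdiff, hB, Finset.mem_filter] at hm
        have := hm.2
        by_contra h
        exact this ⟨hm.1, fun h' => h h'⟩)
      simpa [nsmul_eq_mul, hcard] using this
    rw [Nat.cast_sub hBcard] at h2
    have hβρ : 0 ≤ (1 - β) * ρ := mul_nonneg (by linarith) hρ
    have hBle : (B.card : ℝ) ≤ α * M := hfrac
    nlinarith [hsplit, h1, h2]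
  -- triangle inequality termwise
  have htri : ∀ m, dist (y m) (y (m + 1))
      ≤ e m + dist (x (τ m)) (x (τ (m + 1))) + e (m + 1) := by
    intro m
    calc dist (y m) (y (m + 1)) ≤ dist (y m) (x (τ (m+1))) + dist (x (τ (m+1))) (y (m+1)) :=
          dist_triangle _ _ _
      _ ≤ (dist (y m) (x (τ m)) + dist (x (τ m)) (x (τ (m+1)))) + dist (x (τ (m+1))) (y (m+1)) := by
          gcongr; exact dist_triangle _ _ _
      _ = e m + dist (x (τ m)) (x (τ (m + 1))) + e (m + 1) := by
          simp [he, dist_comm]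
  have hsum1 : ∑ m ∈ Finset.range (M - 1), e m ≤ ∑ m ∈ Finset.range M, e m :=
    Finset.sum_le_sum_of_subset_of_nonneg
      (Finset.range_subset_range.mpr (Nat.sub_le M 1)) (fun m _ _ => henn m)
  have hsum2 : ∑ m ∈ Finset.range (M - 1), e (m + 1) ≤ ∑ m ∈ Finset.range M, e m := by
    have : ∑ m ∈ Finset.range (M - 1), e (m + 1) = ∑ m ∈ Finset.Ico 1 M, e m := by
      rw [Finset.sum_Ico_eq_sum_range]
      simp [add_comm]
    rw [this]
    exact Finset.sum_le_sum_of_subset_of_nonneg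
      (by rw [Finset.range_eq_Ico]; exact Finset.Ico_subset_Ico (Nat.zero_le 1) le_rfl)
      (fun m _ _ => henn m)
  calc ∑ m ∈ Finset.range (M - 1), dist (y m) (y (m + 1))
      ≤ ∑ m ∈ Finset.range (M - 1), (e m + dist (x (τ m)) (x (τ (m + 1))) + e (m + 1)) :=
        Finset.sum_le_sum (fun m _ => htri m)
    _ = ∑ m ∈ Finset.range (M - 1), e m + ∑ m ∈ Finset.range (M - 1), dist (x (τ m)) (x (τ (m + 1)))
        + ∑ m ∈ Finset.range (M - 1), e (m + 1) := by rw [Finset.sum_add_distrib, Finset.sum_add_distrib]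
    _ ≤ c + 2 * M * ρ * (β + α - α * β) := by nlinarith [key, hsum1, hsum2, hc]
end

section
/- Let d be a metric on a subset M ⊂ ℝⁿ such that d(x,y) ≥ ‖x − y‖ for all x, y (d dominates the Euclidean metric), and suppose for a fixed x₀ there exist constants A > 0 and integer s ≥ 1 and a neighborhood where d(x₀, x) ≤ A · max_i |z_i(x)|^{1/w_i} with w_i ≤ s, and each |z_i(x)| ≤ ‖x₀−x‖ + C‖x₀−x‖² for some C. Then there exists θ > 0 such that for all x with ‖x₀ − x‖ ≤ θ, one has ‖x₀ − x‖ ≤ d(x₀, x) ≤ 2A ‖x₀ − x‖^{1/s}. -/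
open Finset

/-- Distance comparison lemma: if a metric `d` on a subset of `ℝⁿ` dominates the
Euclidean distance, and near `x₀` satisfies `d(x₀,x) ≤ A maxᵢ |zᵢ(x)|^{1/wᵢ}` in
privileged coordinates `z` whose weights `wᵢ ≤ s` and whose components satisfy
`|zᵢ(x)| ≤ ‖x₀-x‖ + C‖x₀-x‖²`, then for some `θ > 0` and all `‖x₀-x‖ ≤ θ`,
`‖x₀-x‖ ≤ d(x₀,x) ≤ 2A‖x₀-x‖^{1/s}`. -/
theorem distance_comparison
    (n : ℕ) (hn : 0 < n)
    (Mset : Set (EuclideanSpace ℝ (Fin n))) (d : EuclideanSpace ℝ (Fin n) → EuclideanSpace ℝ (Fin n) → ℝ)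
    (hdom : ∀ x ∈ Mset, ∀ y ∈ Mset, ‖x - y‖ ≤ d x y)
    (x₀ : EuclideanSpace ℝ (Fin n)) (hx₀ : x₀ ∈ Mset)
    (z : EuclideanSpace ℝ (Fin n) → Fin n → ℝ)
    (w : Fin n → ℕ) (s : ℕ) (hs : 1 ≤ s) (hw : ∀ i, 1 ≤ w i ∧ w i ≤ s)
    (A C : ℝ) (hA : 0 < A) (hC : 0 ≤ C)
    (ε : ℝ) (hε : 0 < ε)
    (hball : ∀ x ∈ Mset, ‖x₀ - x‖ ≤ ε →
      d x₀ x ≤ A * (Finset.univ.sup' (Finset.univ_nonempty_iff.mpr ⟨⟨0, hn⟩⟩)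
        (fun i => |z x i| ^ ((w i : ℝ))⁻¹)))
    (hcoord : ∀ x ∈ Mset, ∀ i, |z x i| ≤ ‖x₀ - x‖ + C * ‖x₀ - x‖ ^ 2) :
    ∃ θ > 0, ∀ x ∈ Mset, ‖x₀ - x‖ ≤ θ →
      ‖x₀ - x‖ ≤ d x₀ x ∧ d x₀ x ≤ 2 * A * ‖x₀ - x‖ ^ ((s : ℝ))⁻¹ := by
  have hC1 : 0 < C + 1 := by linarith
  refine ⟨min ε (min (1/2) (1/(C+1))), by positivity, fun x hx hxθ => ?_⟩
  set r := ‖x₀ - x‖ with hr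
  have hr0 : 0 ≤ r := norm_nonneg _
  have hrε : r ≤ ε := hxθ.trans (min_le_left _ _)
  have hrhalf : r ≤ 1/2 := hxθ.trans ((min_le_right _ _).trans (min_le_left _ _))
  have hrC : r ≤ 1/(C+1) := hxθ.trans ((min_le_right _ _).trans (min_le_right _ _))
  refine ⟨hdom x₀ hx₀ x hx, ?_⟩
  have hCr : C * r ≤ 1 := by
    rw [div_eq_inv_mul, mul_one] at hrC
    calc C * r ≤ C * (C+1)⁻¹ := by
          exact mul_le_mul_of_nonneg_left hrC hC
      _ ≤ (C+1) * (C+1)⁻¹ := by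
          apply mul_le_mul_of_nonneg_right (by linarith) (by positivity)
      _ = 1 := mul_inv_cancel₀ (ne_of_gt hC1)
  have hz2r : ∀ i, |z x i| ≤ 2 * r := fun i => by
    have := hcoord x hx i
    have : |z x i| ≤ r + C * r ^ 2 := this
    nlinarith
  have h2r1 : 2 * r ≤ 1 := by linarith
  have hs' : (0:ℝ) < (s : ℝ)⁻¹ := by positivity
  have key : ∀ i : Fin n, |z x i| ^ ((w i : ℝ))⁻¹ ≤ 2 * r ^ ((s : ℝ))⁻¹ := by
    intro i
    have hw1 := (hw i).1
    have hws := (hw i).2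
    have hwi0 : (0:ℝ) < (w i : ℝ)⁻¹ := by
      have : (0:ℝ) < (w i : ℝ) := by exact_mod_cast Nat.lt_of_lt_of_le Nat.zero_lt_one hw1
      positivity
    have h1 : |z x i| ^ ((w i : ℝ))⁻¹ ≤ (2*r) ^ ((w i : ℝ))⁻¹ :=
      Real.rpow_le_rpow (abs_nonneg _) (hz2r i) (le_of_lt hwi0)
    have h2 : (2*r) ^ ((w i : ℝ))⁻¹ ≤ (2*r) ^ ((s : ℝ))⁻¹ := by
      rcases eq_or_lt_of_le (by positivity : (0:ℝ) ≤ 2*r) with h0 | h0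
      · rw [← h0, Real.zero_rpow (ne_of_gt hwi0), Real.zero_rpow (ne_of_gt hs')]
      · apply Real.rpow_le_rpow_of_exponent_ge h0 h2r1
        apply inv_anti₀ (by positivity)
        exact_mod_cast hws
    have h3 : (2*r) ^ ((s : ℝ))⁻¹ ≤ 2 * r ^ ((s : ℝ))⁻¹ := by
      rw [Real.mul_rpow (by norm_num) hr0]
      apply mul_le_mul_of_nonneg_right _ (Real.rpow_nonneg hr0 _)
      calc (2:ℝ) ^ ((s : ℝ))⁻¹ ≤ (2:ℝ) ^ (1:ℝ) := by
            apply Real.rpow_le_rpow_of_exponent_le (by norm_num)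
            rw [inv_le_one_iff₀]; right; exact_mod_cast hs
        _ = 2 := Real.rpow_one 2
    linarith
  have hsup : (Finset.univ.sup' (Finset.univ_nonempty_iff.mpr ⟨⟨0, hn⟩⟩)
      (fun i => |z x i| ^ ((w i : ℝ))⁻¹)) ≤ 2 * r ^ ((s : ℝ))⁻¹ :=
    Finset.sup'_le _ _ fun i _ => key i
  calc d x₀ x ≤ A * (Finset.univ.sup' (Finset.univ_nonempty_iff.mpr ⟨⟨0, hn⟩⟩)
        (fun i => |z x i| ^ ((w i : ℝ))⁻¹)) := hball x hx hrε
    _ ≤ A * (2 * r ^ ((s : ℝ))⁻¹) := mul_le_mul_of_nonneg_left hsup hA.le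
    _ = 2 * A * r ^ ((s : ℝ))⁻¹ := by ring
end

section
/- Let S₁,...,S_M be disjoint measurable subsets of a finite-measure set F with μ(S_m) = μ(S₁) ≥ ((2 + log(1/α))/n) e² μ(F) for α ∈ (0,1), and let V be n i.i.d. uniform samples from F. Define K_n = #{m : S_m ∩ V = ∅}. Then P(K_n ≥ αM) ≤ e^{−αM}/(1 − e^{−n}). -/
open scoped Classical

open MeasureTheory ENNReal

private lemma pow_le_exp_mul_factorial (t : ℕ) :
    (t : ℝ) ^ t ≤ Real.exp t * t.factorial := by
  have h := Real.sum_le_exp_of_nonneg (x := (t : ℝ)) (by positivity) (t + 1)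
  have h2 : (t : ℝ) ^ t / t.factorial ≤ Real.exp t :=
    le_trans (Finset.single_le_sum (f := fun i => (t : ℝ) ^ i / i.factorial)
      (fun i _ => by positivity) (Finset.self_mem_range_succ t)) h
  rw [div_le_iff₀ (by positivity)] at h2
  linarith

private lemma choose_mul_exp_le {M t : ℕ} {α : ℝ} (hα0 : 0 < α) (hα1 : α < 1)
    (ht1 : 1 ≤ t) (htα : α * M ≤ t) :
    (M.choose t : ℝ) * Real.exp (-(t * (2 + Real.log (1 / α)))) ≤
      Real.exp (-(α * M)) := by
  have ht0 : (0 : ℝ) < t := by exact_mod_cast ht1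
  have hL : Real.exp (-Real.log (1 / α)) = α := by
    rw [Real.log_div one_ne_zero hα0.ne', Real.log_one, zero_sub, neg_neg,
      Real.exp_log hα0]
  have hfac : (0 : ℝ) < (t.factorial : ℝ) := by exact_mod_cast t.factorial_pos
  have hchoose : (M.choose t : ℝ) ≤ (M : ℝ) ^ t / t.factorial :=
    Nat.choose_le_pow_div t M
  have hfac2 : (M : ℝ) ^ t / t.factorial ≤ ((M : ℝ) * Real.exp 1 / t) ^ t := by
    rw [div_le_iff₀ hfac, div_pow, mul_pow]
    rw [div_mul_eq_mul_div, le_div_iff₀ (by positivity)]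
    have hh := pow_le_exp_mul_factorial t
    have hexp : Real.exp 1 ^ t = Real.exp t := by
      rw [← Real.exp_nat_mul]; norm_num
    calc (M : ℝ) ^ t * (t : ℝ) ^ t ≤ (M : ℝ) ^ t * (Real.exp t * t.factorial) := by
          gcongr
      _ = (M : ℝ) ^ t * Real.exp 1 ^ t * t.factorial := by rw [hexp]; ring
  have hexpand : Real.exp (-(t * (2 + Real.log (1 / α)))) =
      (Real.exp (-2) * α) ^ t := by
    rw [show -((t : ℝ) * (2 + Real.log (1 / α))) =
        (t : ℝ) * (-(2 + Real.log (1 / α))) by ring,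
      Real.exp_nat_mul]
    congr 1
    rw [show -(2 + Real.log (1 / α)) = (-2) + (-Real.log (1 / α)) by ring,
      Real.exp_add, hL]
  have hMt : (M : ℝ) * α / t ≤ 1 := by
    rw [div_le_one ht0]; linarith
  have key : (M.choose t : ℝ) * Real.exp (-(t * (2 + Real.log (1 / α)))) ≤
      Real.exp (-1) ^ t := by
    rw [hexpand]
    calc (M.choose t : ℝ) * (Real.exp (-2) * α) ^ t
        ≤ ((M : ℝ) * Real.exp 1 / t) ^ t * (Real.exp (-2) * α) ^ t :=
          mul_le_mul_of_nonneg_right (hchoose.trans hfac2) (by positivity)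
      _ = ((M : ℝ) * Real.exp 1 / t * (Real.exp (-2) * α)) ^ t := by
          rw [← mul_pow]
      _ ≤ Real.exp (-1) ^ t := by
          apply pow_le_pow_left₀ (by positivity)
          have h1 : (M : ℝ) * Real.exp 1 / t * (Real.exp (-2) * α)
              = (M : ℝ) * α / t * (Real.exp 1 * Real.exp (-2)) := by ring
          rw [h1, ← Real.exp_add]
          calc (M : ℝ) * α / t * Real.exp (1 + -2) ≤ 1 * Real.exp (1 + -2) := by
                gcongr
            _ = Real.exp (-1) := by norm_num
  refine key.trans ?_
  rw [← Real.exp_nat_mul]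
  apply Real.exp_le_exp.mpr
  nlinarith

/-- Small-ball sampling lemma: for disjoint equal-measure sets
`S 1, …, S M ⊆ F` with `μ(S m) ≥ ((2 + log(1/α))/n) e² μ(F)` and `n` i.i.d.
uniform samples from `F`, the number `K n` of sets containing no sample exceeds
`α M` with probability at most `e^{-αM}/(1 - e^{-n})`. -/
theorem small_ball_sampling
    {k : ℕ} (n M : ℕ) (hn : 1 ≤ n) (α : ℝ) (hα : α ∈ Set.Ioo (0 : ℝ) 1)
    (F : Set (Fin k → ℝ)) (hFmeas : MeasurableSet F)
    (hF0 : 0 < volume F) (hFfin : volume F < ⊤)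
    (S : Fin M → Set (Fin k → ℝ)) (hSmeas : ∀ m, MeasurableSet (S m))
    (hSsub : ∀ m, S m ⊆ F)
    (hSdisj : ∀ m m', m ≠ m' → Disjoint (S m) (S m'))
    (hSeq : ∀ m m', volume (S m) = volume (S m'))
    (hSvol : ∀ m,
      ENNReal.ofReal (((2 + Real.log (1 / α)) / n) * Real.exp 2) * volume F
        ≤ volume (S m)) :
    (Measure.pi fun _ : Fin n => (volume F)⁻¹ • volume.restrict F)
        {ω | α * M ≤
          ((Finset.univ.filter (fun m : Fin M => ∀ i, ω i ∉ S m)).card : ℝ)}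
      ≤ ENNReal.ofReal (Real.exp (-(α * M)) / (1 - Real.exp (-(n : ℝ)))) := by
  obtain ⟨hα0, hα1⟩ := hα
  have hdenom : 0 < 1 - Real.exp (-(n : ℝ)) := by
    have hh : Real.exp (-(n : ℝ)) < 1 := Real.exp_lt_one_iff.mpr (by
      have : (0 : ℝ) < n := by exact_mod_cast hn
      linarith)
    linarith
  set μ0 : Measure (Fin k → ℝ) := (volume F)⁻¹ • volume.restrict F with hμ0
  have hprob : IsProbabilityMeasure μ0 := by
    constructor
    rw [hμ0, Measure.smul_apply, Measure.restrict_apply_univ, smul_eq_mul]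
    exact ENNReal.inv_mul_cancel hF0.ne' hFfin.ne
  rcases Nat.eq_zero_or_pos M with hM | hM
  · subst hM
    refine le_trans prob_le_one ?_
    rw [show ((0 : ℕ) : ℝ) = 0 by norm_num, mul_zero, neg_zero, Real.exp_zero,
      ← ENNReal.ofReal_one]
    apply ENNReal.ofReal_le_ofReal
    rw [le_div_iff₀ hdenom]
    nlinarith [Real.exp_pos (-(n : ℝ))]
  -- main case
  set L := Real.log (1 / α) with hLdef
  have hL0 : 0 ≤ L := Real.log_nonneg (by rw [le_div_iff₀ hα0]; linarith)
  set t := ⌈α * (M : ℝ)⌉₊ with htdef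
  have ht1 : 1 ≤ t := by
    rw [htdef, Nat.one_le_iff_ne_zero]
    simp only [ne_eq, Nat.ceil_eq_zero, not_le]
    have : (0 : ℝ) < M := by exact_mod_cast hM
    positivity
  have htα : α * (M : ℝ) ≤ t := Nat.le_ceil _
  have htM : t ≤ M := Nat.ceil_le.mpr (by
    have h0M : (0 : ℝ) ≤ M := by positivity
    nlinarith)
  set c := (volume F).toReal with hcdef
  have hc0 : 0 < c := ENNReal.toReal_pos hF0.ne' hFfin.ne
  set r := ((2 + L) / n) * Real.exp 2 with hrdef
  have hn0 : (0 : ℝ) < n := by exact_mod_cast hn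
  have hr0 : 0 ≤ r := by
    apply mul_nonneg _ (Real.exp_pos 2).le
    apply div_nonneg (by linarith) (by positivity)
  -- the per-subset bound
  have key : ∀ T : Finset (Fin M), T.card = t →
      (Measure.pi fun _ : Fin n => μ0)
        (Set.pi Set.univ fun _ : Fin n => (⋃ m ∈ T, S m)ᶜ)
        ≤ ENNReal.ofReal (Real.exp ((n : ℝ) * -(t * r))) := by
    intro T hT
    set A := ⋃ m ∈ T, S m with hAdef
    have hAmeas : MeasurableSet A :=
      MeasurableSet.biUnion T.countable_toSet fun m _ => hSmeas m
    have hAsub : A ⊆ F := Set.iUnion₂_subset fun m _ => hSsub m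
    have hAfin : volume A ≠ ⊤ := ((measure_mono hAsub).trans_lt hFfin).ne
    have hAvol : ENNReal.ofReal ((t : ℝ) * (r * c)) ≤ volume A := by
      rw [hAdef, measure_biUnion_finset
        (fun m _ m' _ hne => hSdisj m m' hne) (fun m _ => hSmeas m)]
      calc ENNReal.ofReal ((t : ℝ) * (r * c))
          = (t : ℝ≥0∞) * (ENNReal.ofReal r * volume F) := by
            rw [ENNReal.ofReal_mul (by positivity), ENNReal.ofReal_mul hr0,
              ENNReal.ofReal_natCast, hcdef, ENNReal.ofReal_toReal hFfin.ne]
        _ = ∑ _m ∈ T, ENNReal.ofReal r * volume F := by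
            rw [Finset.sum_const, hT, nsmul_eq_mul]
        _ ≤ ∑ m ∈ T, volume (S m) := Finset.sum_le_sum fun m _ => hSvol m
    have hApi : (Measure.pi fun _ : Fin n => μ0)
        (Set.pi Set.univ fun _ : Fin n => Aᶜ) = μ0 Aᶜ ^ n := by
      rw [Measure.pi_pi, Finset.prod_const, Finset.card_univ, Fintype.card_fin]
    rw [hApi]
    have hμ0A : μ0 Aᶜ ≤ ENNReal.ofReal (Real.exp (-((t : ℝ) * r))) := by
      have hcompl : μ0 Aᶜ = (volume F)⁻¹ * (volume F - volume A) := by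
        rw [hμ0, Measure.smul_apply, smul_eq_mul,
          Measure.restrict_apply hAmeas.compl, ← Set.diff_eq_compl_inter,
          measure_diff hAsub hAmeas.nullMeasurableSet hAfin]
      rw [hcompl]
      calc (volume F)⁻¹ * (volume F - volume A)
          ≤ (volume F)⁻¹ * (volume F - ENNReal.ofReal ((t : ℝ) * (r * c))) := by
            gcongr
        _ = ENNReal.ofReal c⁻¹ *
              (ENNReal.ofReal c - ENNReal.ofReal ((t : ℝ) * (r * c))) := by
            have e1 : volume F = ENNReal.ofReal c :=
              (ENNReal.ofReal_toReal hFfin.ne).symm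
            have e2 : (volume F)⁻¹ = ENNReal.ofReal c⁻¹ := by
              rw [e1, ← ENNReal.ofReal_inv_of_pos hc0]
            rw [← e1, ← e2]
        _ = ENNReal.ofReal (c⁻¹ * (c - (t : ℝ) * (r * c))) := by
            symm
            rw [ENNReal.ofReal_mul (show (0:ℝ) ≤ c⁻¹ by positivity),
              ENNReal.ofReal_sub _ (by positivity)]
        _ ≤ ENNReal.ofReal (Real.exp (-((t : ℝ) * r))) := by
            apply ENNReal.ofReal_le_ofReal
            have heq : c⁻¹ * (c - (t : ℝ) * (r * c)) = 1 - (t : ℝ) * r := by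
              field_simp
            rw [heq]
            exact Real.one_sub_le_exp_neg _
    calc μ0 Aᶜ ^ n ≤ ENNReal.ofReal (Real.exp (-((t : ℝ) * r))) ^ n :=
          pow_le_pow_left₀ zero_le hμ0A n
      _ = ENNReal.ofReal (Real.exp ((n : ℝ) * -(t * r))) := by
          rw [← ENNReal.ofReal_pow (Real.exp_pos _).le, ← Real.exp_nat_mul]
  -- event inclusion
  have hsub : {ω : Fin n → Fin k → ℝ | α * M ≤
      ((Finset.univ.filter (fun m : Fin M => ∀ i, ω i ∉ S m)).card : ℝ)} ⊆
      ⋃ T ∈ Finset.univ.powersetCard t,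
        Set.pi Set.univ fun _ : Fin n => (⋃ m ∈ T, S m)ᶜ := by
    intro ω hω
    have hcard : t ≤ (Finset.univ.filter fun m : Fin M => ∀ i, ω i ∉ S m).card := by
      rw [htdef, Nat.ceil_le]
      exact_mod_cast hω
    obtain ⟨T, hTsub, hTcard⟩ := Finset.exists_subset_card_eq hcard
    refine Set.mem_biUnion (Finset.mem_powersetCard_univ.mpr hTcard) ?_
    intro i _
    simp only [Set.mem_compl_iff, Set.mem_iUnion, not_exists]
    intro m hm
    exact (Finset.mem_filter.mp (hTsub hm)).2 i
  refine le_trans (measure_mono hsub) ?_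
  refine le_trans (measure_biUnion_finset_le _ _) ?_
  calc ∑ T ∈ Finset.univ.powersetCard t, (Measure.pi fun _ : Fin n => μ0)
        (Set.pi Set.univ fun _ : Fin n => (⋃ m ∈ T, S m)ᶜ)
      ≤ ∑ _T ∈ Finset.univ.powersetCard t,
          ENNReal.ofReal (Real.exp ((n : ℝ) * -(t * r))) :=
        Finset.sum_le_sum fun T hT =>
          key T (Finset.mem_powersetCard_univ.mp hT)
    _ = (M.choose t : ℝ≥0∞) * ENNReal.ofReal (Real.exp ((n : ℝ) * -(t * r))) := by
        rw [Finset.sum_const, nsmul_eq_mul, Finset.card_powersetCard,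
          Finset.card_univ, Fintype.card_fin]
    _ = ENNReal.ofReal ((M.choose t : ℝ) * Real.exp ((n : ℝ) * -(t * r))) := by
        rw [ENNReal.ofReal_mul (by positivity), ENNReal.ofReal_natCast]
    _ ≤ ENNReal.ofReal (Real.exp (-(α * M)) / (1 - Real.exp (-(n : ℝ)))) := by
        apply ENNReal.ofReal_le_ofReal
        have hnr : (n : ℝ) * r = (2 + L) * Real.exp 2 := by
          rw [hrdef]; field_simp
        have hstep1 : (n : ℝ) * -(t * r) ≤ -((t : ℝ) * (2 + L)) := by
          have he2 : (1 : ℝ) ≤ Real.exp 2 := by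
            nlinarith [Real.add_one_le_exp (2 : ℝ)]
          have ht0' : (0 : ℝ) ≤ t := by positivity
          have : (t : ℝ) * (2 + L) * 1 ≤ (t : ℝ) * ((2 + L) * Real.exp 2) := by
            have h2L : (0:ℝ) ≤ 2 + L := by linarith
            nlinarith [mul_le_mul_of_nonneg_left he2 (mul_nonneg ht0' h2L)]
          calc (n : ℝ) * -(t * r) = -((t : ℝ) * ((n : ℝ) * r)) := by ring
            _ = -((t : ℝ) * ((2 + L) * Real.exp 2)) := by rw [hnr]
            _ ≤ -((t : ℝ) * (2 + L)) := by linarith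
        calc (M.choose t : ℝ) * Real.exp ((n : ℝ) * -(t * r))
            ≤ (M.choose t : ℝ) * Real.exp (-((t : ℝ) * (2 + L))) := by
              exact mul_le_mul_of_nonneg_left (Real.exp_le_exp.mpr hstep1)
                (by positivity)
          _ ≤ Real.exp (-(α * M)) := choose_mul_exp_le hα0 hα1 ht1 htα
          _ ≤ Real.exp (-(α * M)) / (1 - Real.exp (-(n : ℝ))) := by
              rw [le_div_iff₀ hdenom]
              nlinarith [Real.exp_pos (-(α * (M : ℝ))), Real.exp_pos (-(n : ℝ))]
end
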